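/- arXiv:2202.11314 — 6 statements merged into one kernel-verified Lean document; each statement's English description precedes it below -/
import Mathlib

section
/- Let σ be a real symmetric positive definite d×d matrix and σ* ∈ ℝ^d. Let ς be the positive semidefinite matrix square root of σ² + σ* σ*ᵀ. Then ς is positive definite (hence invertible) and the Euclidean norm of the vector ς⁻¹ σ* is strictly less than 1. -/
open Matrix

lemma aux_mul_self_posDef {d : ℕ} {σ : Matrix (Fin d) (Fin d) ℝ} (hσ : σ.PosDef) :
    (σ * σ).PosDef := by
  refine PosDef.of_dotProduct_mulVec_pos (by rw [Matrix.IsHermitian, conjTranspose_mul, hσ.isHermitian.eq]) fun x hx => ?_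
  have hinj : Function.Injective (σ.mulVec) := mulVec_injective_iff_isUnit.mpr hσ.isUnit
  have hy : σ *ᵥ x ≠ 0 := fun h => hx (hinj (by simpa using h))
  have hsym : σᵀ = σ := by
    rw [← conjTranspose_eq_transpose_of_trivial, hσ.isHermitian.eq]
  have key : star x ⬝ᵥ (σ * σ) *ᵥ x = star (σ *ᵥ x) ⬝ᵥ (σ *ᵥ x) := by
    rw [← mulVec_mulVec, dotProduct_mulVec, star_trivial, star_trivial,
      ← mulVec_transpose, hsym]
  rw [key]
  exact dotProduct_star_self_pos_iff.mpr hy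

lemma aux_vecMulVec_posSemidef {d : ℕ} (u : Fin d → ℝ) : (vecMulVec u u).PosSemidef := by
  have h := posSemidef_conjTranspose_mul_self (replicateRow (Fin 1) u)
  rw [conjTranspose_replicateRow, star_trivial] at h
  convert h using 1
  exact vecMulVec_eq (Fin 1) u u

lemma aux_posDef_of_sq_posDef {d : ℕ} {ς : Matrix (Fin d) (Fin d) ℝ} (hς : ς.PosSemidef)
    (h2 : (ς * ς).PosDef) : ς.PosDef := by
  refine PosDef.of_dotProduct_mulVec_pos hς.isHermitian fun x hx => ?_
  rcases lt_or_eq_of_le (hς.dotProduct_mulVec_nonneg x) with h | h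
  · exact h
  · exfalso
    have h0 : ς *ᵥ x = 0 := (hς.dotProduct_mulVec_zero_iff x).mp h.symm
    have := h2.dotProduct_mulVec_pos hx
    rw [← mulVec_mulVec, h0, mulVec_zero, dotProduct_zero] at this
    exact lt_irrefl 0 this

/-- Let `σ` be a real symmetric positive definite `d × d` matrix and `σ* ∈ ℝ^d`.
If `ς` is the positive semidefinite matrix square root of `σ² + σ* σ*ᵀ`, then `ς`
is positive definite (hence invertible) and the Euclidean norm of `ς⁻¹ σ*` is
strictly less than `1`. -/
theorem transformed_volatility_norm_lt_one (d : ℕ)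
    (σ : Matrix (Fin d) (Fin d) ℝ) (hσ : σ.PosDef)
    (σstar : Fin d → ℝ)
    (ς : Matrix (Fin d) (Fin d) ℝ) (hς : ς.PosSemidef)
    (hςsq : ς * ς = σ * σ + vecMulVec σstar σstar) :
    ς.PosDef ∧ ‖(EuclideanSpace.equiv (Fin d) ℝ).symm (ς⁻¹ *ᵥ σstar)‖ < 1 := by
  have hσ2 : (σ * σ).PosDef := aux_mul_self_posDef hσ
  have h2 : (ς * ς).PosDef := by
    rw [hςsq]; exact hσ2.add_posSemidef (aux_vecMulVec_posSemidef σstar)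
  have hςpd : ς.PosDef := aux_posDef_of_sq_posDef hς h2
  refine ⟨hςpd, ?_⟩
  have hdet : IsUnit ς.det := (isUnit_iff_isUnit_det ς).mp hςpd.isUnit
  have hinv1 : ς * ς⁻¹ = 1 := mul_nonsing_inv ς hdet
  set u := ς⁻¹ *ᵥ σstar with hu
  set w := ς⁻¹ *ᵥ u with hw
  set c := σstar ⬝ᵥ w with hc
  have hsyminv : (ς⁻¹)ᵀ = ς⁻¹ := by
    rw [← conjTranspose_eq_transpose_of_trivial, hςpd.inv.isHermitian.eq]
  -- c = u ⬝ᵥ u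
  have hcu : c = u ⬝ᵥ u := by
    rw [hc, hw, dotProduct_mulVec]
    congr 1
    rw [← mulVec_transpose, hsyminv]
  have hc0 : 0 ≤ c := by
    rw [hcu]
    exact Finset.sum_nonneg fun i _ => mul_self_nonneg _
  -- (ς * ς) *ᵥ w = σstar
  have hςw : ς *ᵥ w = u := by
    rw [hw, mulVec_mulVec, hinv1, one_mulVec]
  have hς2w : (ς * ς) *ᵥ w = σstar := by
    rw [← mulVec_mulVec, hςw, hu, mulVec_mulVec, hinv1, one_mulVec]
  -- vecMulVec action
  have hvmv : vecMulVec σstar σstar *ᵥ w = c • σstar := by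
    ext i
    simp only [mulVec, vecMulVec_apply, dotProduct, Pi.smul_apply, smul_eq_mul, hc]
    rw [Finset.sum_mul]
    exact Finset.sum_congr rfl fun j _ => by ring
  have hσw : (σ * σ) *ᵥ w = (1 - c) • σstar := by
    have h := hς2w
    rw [hςsq, add_mulVec, hvmv] at h
    rw [eq_sub_of_add_eq h, sub_smul, one_smul]
  have hq : w ⬝ᵥ ((σ * σ) *ᵥ w) = (1 - c) * c := by
    rw [hσw, dotProduct_smul, smul_eq_mul, dotProduct_comm, ← hc]
  -- c < 1
  have hclt : c < 1 := by
    by_cases hw0 : w = 0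
    · have : c = 0 := by rw [hc, hw0, dotProduct_zero]
      rw [this]; norm_num
    · have hp : 0 < w ⬝ᵥ ((σ * σ) *ᵥ w) := by
        have := hσ2.dotProduct_mulVec_pos hw0
        rwa [star_trivial] at this
      rw [hq] at hp
      nlinarith
  -- conclude
  have hnorm : ‖(EuclideanSpace.equiv (Fin d) ℝ).symm u‖ = Real.sqrt (u ⬝ᵥ u) := by
    rw [EuclideanSpace.norm_eq]
    congr 1
    simp [dotProduct, Real.norm_eq_abs, sq_abs, pow_two]
  rw [hnorm, ← hcu, show (1:ℝ) = Real.sqrt 1 by simp]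
  exact Real.sqrt_lt_sqrt hc0 hclt
end

section
/- Let K be a nonempty closed convex subset of ℝ^d, let α ∈ ℝ^d, let a ∈ ℝ^d with ‖a‖ < 1, and let n ≥ 2 be an integer. Define H : ℝ → ℝ by H(x) = x + (1/(n−1)) ⟨a, P_K(α + x a)⟩. Then H is a bijection of ℝ onto ℝ, and its inverse H⁻¹ is nonexpansive: |H⁻¹(x) − H⁻¹(y)| ≤ |x − y| for all x, y ∈ ℝ. -/
open scoped RealInnerProductSpace

/-- Lemma 5.1 of the paper. Let `K` be a nonempty closed convex subset of `ℝ^d`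
(with metric projection `P`), `α ∈ ℝ^d`, `a ∈ ℝ^d` with `‖a‖ < 1`, and `n ≥ 2`.
Then `H(x) = x + (1/(n-1)) ⟨a, P (α + x a)⟩` is a bijection of `ℝ` onto `ℝ` whose
inverse is nonexpansive. -/
theorem bijection_with_nonexpansive_inverse (d : ℕ)
    (K : Set (EuclideanSpace ℝ (Fin d)))
    (hKne : K.Nonempty) (hKcl : IsClosed K) (hKco : Convex ℝ K)
    (P : EuclideanSpace ℝ (Fin d) → EuclideanSpace ℝ (Fin d))
    (hPmem : ∀ x, P x ∈ K)
    (hPmin : ∀ x, ∀ y ∈ K, dist x (P x) ≤ dist x y)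
    (α a : EuclideanSpace ℝ (Fin d)) (ha : ‖a‖ < 1)
    (n : ℕ) (hn : 2 ≤ n)
    (H : ℝ → ℝ)
    (hH : ∀ x : ℝ, H x = x + (1 / ((n : ℝ) - 1)) * (inner ℝ a (P (α + x • a)) : ℝ)) :
    Function.Bijective H ∧
    ∃ Hinv : ℝ → ℝ, Function.LeftInverse Hinv H ∧ Function.RightInverse Hinv H ∧
      ∀ x y : ℝ, |Hinv x - Hinv y| ≤ |x - y| := by
  -- variational inequality for the projection
  have hvar : ∀ u : EuclideanSpace ℝ (Fin d), ∀ w ∈ K, ⟪u - P u, w - P u⟫ ≤ 0 := by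
    intro u w hw
    have hproj : ‖u - P u‖ = ⨅ z : K, ‖u - (z : EuclideanSpace ℝ (Fin d))‖ := by
      haveI : Nonempty K := hKne.to_subtype
      refine le_antisymm (le_ciInf fun z => ?_)
        (ciInf_le ⟨0, fun b hb => ?_⟩ (⟨P u, hPmem u⟩ : K))
      · simpa [dist_eq_norm] using hPmin u z z.2
      · obtain ⟨z, rfl⟩ := hb; exact norm_nonneg _
    exact (norm_eq_iInf_iff_real_inner_le_zero hKco (hPmem u)).mp hproj w hw
  -- monotonicity of the projection
  have hmono : ∀ u v, ‖P u - P v‖ ^ 2 ≤ ⟪u - v, P u - P v⟫ := by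
    intro u v
    have h1 := hvar u (P v) (hPmem v)
    have h2 := hvar v (P u) (hPmem u)
    have h1' : 0 ≤ ⟪u - P u, P u - P v⟫ := by
      rw [show P v - P u = -(P u - P v) by abel, inner_neg_right] at h1; linarith
    have h2' : 0 ≤ ⟪P v - v, P u - P v⟫ := by
      rw [show v - P v = -(P v - v) by abel, inner_neg_left] at h2; linarith
    have e1 : ⟪u - v, P u - P v⟫
        = ⟪u - P u, P u - P v⟫ + ⟪P u - P v, P u - P v⟫ + ⟪P v - v, P u - P v⟫ := by
      rw [← inner_add_left, ← inner_add_left]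
      congr 1
      abel
    have e2 : ⟪P u - P v, P u - P v⟫ = ‖P u - P v‖ ^ 2 :=
      real_inner_self_eq_norm_sq _
    rw [e1, e2]; linarith
  -- nonexpansiveness of the projection
  have hPlip : ∀ u v, ‖P u - P v‖ ≤ ‖u - v‖ := by
    intro u v
    have h1 := hmono u v
    have h2 := real_inner_le_norm (u - v) (P u - P v)
    nlinarith [norm_nonneg (P u - P v), norm_nonneg (u - v)]
  set c : ℝ := 1 / ((n : ℝ) - 1) with hc
  have hn1 : (1 : ℝ) ≤ (n : ℝ) - 1 := by
    have : (2 : ℝ) ≤ (n : ℝ) := by exact_mod_cast hn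
    linarith
  have hc0 : 0 < c := by positivity
  have hc1 : c ≤ 1 := by
    rw [hc, div_le_one (by linarith)]; linarith
  set g : ℝ → ℝ := fun x => ⟪a, P (α + x • a)⟫ with hg
  have hdiff : ∀ x y : ℝ, (α + x • a) - (α + y • a) = (x - y) • a := by
    intro x y
    rw [sub_smul]; abel
  -- monotonicity of g
  have f1 : ∀ x y : ℝ, 0 ≤ (x - y) * (g x - g y) := by
    intro x y
    have h := hmono (α + x • a) (α + y • a)
    rw [hdiff x y, real_inner_smul_left, inner_sub_right] at h
    nlinarith [sq_nonneg ‖P (α + x • a) - P (α + y • a)‖]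
  -- Lipschitz bound for g
  have f2 : ∀ x y : ℝ, |g x - g y| ≤ ‖a‖ ^ 2 * |x - y| := by
    intro x y
    have e : g x - g y = ⟪a, P (α + x • a) - P (α + y • a)⟫ := by
      rw [inner_sub_right]
    rw [e]
    calc |⟪a, P (α + x • a) - P (α + y • a)⟫|
        ≤ ‖a‖ * ‖P (α + x • a) - P (α + y • a)‖ := abs_real_inner_le_norm _ _
      _ ≤ ‖a‖ * ‖(α + x • a) - (α + y • a)‖ := by
          have := hPlip (α + x • a) (α + y • a)
          nlinarith [norm_nonneg a]
      _ = ‖a‖ ^ 2 * |x - y| := by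
          rw [hdiff x y, norm_smul, Real.norm_eq_abs]; ring
  have hHxy : ∀ x : ℝ, H x = x + c * g x := by
    intro x; rw [hH x]
  have ha2 : ‖a‖ ^ 2 ≤ 1 := by nlinarith [norm_nonneg a]
  -- H is expansive
  have hexp : ∀ x y : ℝ, |x - y| ≤ |H x - H y| := by
    intro x y
    rcases eq_or_ne x y with rfl | hne
    · simp
    · have hx : 0 < |x - y| := abs_pos.mpr (sub_ne_zero.mpr hne)
      have h1 : (x - y) ^ 2 ≤ (H x - H y) * (x - y) := by
        rw [hHxy x, hHxy y]
        have := f1 x y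
        nlinarith
      have h2 : (H x - H y) * (x - y) ≤ |H x - H y| * |x - y| := by
        rw [← abs_mul]; exact le_abs_self _
      have h3 : |x - y| ^ 2 = (x - y) ^ 2 := sq_abs _
      nlinarith
  -- H is Lipschitz with constant 2
  have hlip : ∀ x y : ℝ, |H x - H y| ≤ 2 * |x - y| := by
    intro x y
    rw [hHxy x, hHxy y]
    have h2 := f2 x y
    have : |x + c * g x - (y + c * g y)| ≤ |x - y| + |c * (g x - g y)| := by
      have : x + c * g x - (y + c * g y) = (x - y) + c * (g x - g y) := by ring
      rw [this]; exact abs_add_le _ _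
    have h3 : |c * (g x - g y)| = c * |g x - g y| := by
      rw [abs_mul, abs_of_pos hc0]
    nlinarith [abs_nonneg (g x - g y), abs_nonneg (x - y)]
  have hcont : Continuous H := by
    have : LipschitzWith 2 H := by
      apply LipschitzWith.of_dist_le_mul
      intro x y
      rw [Real.dist_eq, Real.dist_eq]
      simpa using hlip x y
    exact this.continuous
  -- injectivity
  have hinj : Function.Injective H := by
    intro x y hxy
    have := hexp x y
    rw [hxy, sub_self, abs_zero] at this
    have := abs_nonneg (x - y)
    have : |x - y| = 0 := le_antisymm (by linarith) (abs_nonneg _)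
    exact sub_eq_zero.mp (abs_eq_zero.mp this)
  -- growth bounds
  have hup : ∀ x : ℝ, 0 ≤ x → H 0 + x ≤ H x := by
    intro x hx
    rcases eq_or_lt_of_le hx with rfl | hx'
    · simp
    · have h1 : (x - 0) ^ 2 ≤ (H x - H 0) * (x - 0) := by
        rw [hHxy x, hHxy 0]
        have := f1 x 0
        nlinarith
      nlinarith
  have hdown : ∀ x : ℝ, x ≤ 0 → H x ≤ H 0 + x := by
    intro x hx
    rcases eq_or_lt_of_le hx with rfl | hx'
    · simp
    · have h1 : (x - 0) ^ 2 ≤ (H x - H 0) * (x - 0) := by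
        rw [hHxy x, hHxy 0]
        have := f1 x 0
        nlinarith
      nlinarith
  -- surjectivity
  have hsurj : Function.Surjective H := by
    intro t
    set M : ℝ := |t - H 0| with hM
    have hM0 : 0 ≤ M := abs_nonneg _
    have h1 : H (-M) ≤ t := by
      have := hdown (-M) (by linarith)
      have := abs_le.mp (le_refl M)  -- dummy
      have habs : -(M) ≤ t - H 0 := neg_abs_le _
      linarith [hdown (-M) (by linarith : -M ≤ (0:ℝ))]
    have h2 : t ≤ H M := by
      have habs : t - H 0 ≤ M := le_abs_self _
      linarith [hup M hM0]
    have hiv := intermediate_value_Icc (by linarith : -M ≤ M) hcont.continuousOn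
    obtain ⟨x, _, hx⟩ := hiv ⟨h1, h2⟩
    exact ⟨x, hx⟩
  have hbij : Function.Bijective H := ⟨hinj, hsurj⟩
  refine ⟨hbij, Function.invFun H, Function.leftInverse_invFun hinj,
    Function.rightInverse_invFun hsurj, ?_⟩
  intro x y
  have hrx : H (Function.invFun H x) = x := Function.rightInverse_invFun hsurj x
  have hry : H (Function.invFun H y) = y := Function.rightInverse_invFun hsurj y
  have := hexp (Function.invFun H x) (Function.invFun H y)
  rwa [hrx, hry] at this
end

section
/- Let K be a nonempty closed convex subset of ℝ^d, let α ∈ ℝ^d, let a ∈ ℝ^d, and let c ≥ 0. Define H : ℝ → ℝ by H(x) = x + c ⟨a, P_K(α + x a)⟩. Then |H(x) − H(y)| ≥ |x − y| for all x, y ∈ ℝ. -/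
open scoped RealInnerProductSpace


/-- Expansion inequality from the proof of Lemma 5.1 of the paper. Let `K` be a
nonempty closed convex subset of `ℝ^d` (with metric projection `P`), `α, a ∈ ℝ^d`
and `c ≥ 0`. Then `H(x) = x + c ⟨a, P (α + x a)⟩` satisfies
`|H(x) - H(y)| ≥ |x - y|` for all `x, y ∈ ℝ`. -/
theorem expansion_inequality (d : ℕ)
    (K : Set (EuclideanSpace ℝ (Fin d)))
    (hKne : K.Nonempty) (hKcl : IsClosed K) (hKco : Convex ℝ K)
    (P : EuclideanSpace ℝ (Fin d) → EuclideanSpace ℝ (Fin d))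
    (hPmem : ∀ x, P x ∈ K)
    (hPmin : ∀ x, ∀ y ∈ K, dist x (P x) ≤ dist x y)
    (α a : EuclideanSpace ℝ (Fin d)) (c : ℝ) (hc : 0 ≤ c)
    (H : ℝ → ℝ)
    (hH : ∀ x : ℝ, H x = x + c * (inner ℝ a (P (α + x • a)) : ℝ)) :
    ∀ x y : ℝ, |x - y| ≤ |H x - H y| := by
  -- variational inequality for P
  have hvar : ∀ u : EuclideanSpace ℝ (Fin d), ∀ w ∈ K,
      ⟪u - P u, w - P u⟫ ≤ 0 := by
    intro u w hw
    have hinf : ‖u - P u‖ = ⨅ w : K, ‖u - w‖ := by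
      haveI : Nonempty K := hKne.to_subtype
      have hlb : ∀ w : K, ‖u - P u‖ ≤ ‖u - (w : EuclideanSpace ℝ (Fin d))‖ := fun w => by
        simpa [dist_eq_norm] using hPmin u w w.2
      have hbdd : BddBelow (Set.range fun w : K => ‖u - (w : EuclideanSpace ℝ (Fin d))‖) := by
        refine ⟨0, ?_⟩
        rintro _ ⟨w, rfl⟩
        exact norm_nonneg _
      exact le_antisymm (le_ciInf hlb) (ciInf_le hbdd ⟨P u, hPmem u⟩)
    exact (norm_eq_iInf_iff_real_inner_le_zero hKco (hPmem u)).1 hinf w hw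
  -- monotonicity of P
  have hmono : ∀ u v : EuclideanSpace ℝ (Fin d), 0 ≤ ⟪u - v, P u - P v⟫ := by
    intro u v
    have h1 := hvar u (P v) (hPmem v)
    have h2 := hvar v (P u) (hPmem u)
    have e1 : ⟪u - P u, P v - P u⟫ = -⟪u - P u, P u - P v⟫ := by
      rw [← inner_neg_right]
      congr 1
      abel
    have e2 : ⟪P v - v, P u - P v⟫ = -⟪v - P v, P u - P v⟫ := by
      rw [← inner_neg_left]
      congr 1
      abel
    have decomp : u - v = (u - P u) + (P u - P v) + (P v - v) := by abel
    rw [decomp, inner_add_left, inner_add_left, e2]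
    have h5 : (0:ℝ) ≤ ⟪P u - P v, P u - P v⟫ := real_inner_self_nonneg
    rw [e1] at h1
    linarith
  intro x y
  set u := α + x • a
  set v := α + y • a
  have key : 0 ≤ (x - y) * ⟪a, P u - P v⟫ := by
    have := hmono u v
    have e : u - v = (x - y) • a := by
      simp only [u, v]
      rw [add_sub_add_left_eq_sub, ← sub_smul]
    rw [e, real_inner_smul_left] at this
    linarith
  have hd : H x - H y = (x - y) + c * ⟪a, P u - P v⟫ := by
    rw [hH x, hH y, inner_sub_right]
    ring
  have hprod : (x - y) ^ 2 ≤ (H x - H y) * (x - y) := by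
    rw [hd]
    nlinarith [mul_nonneg hc key]
  have hsq : |x - y| * |x - y| ≤ |H x - H y| * |x - y| := by
    calc |x - y| * |x - y| = (x - y) ^ 2 := by rw [← abs_mul, abs_mul_self]; ring
      _ ≤ (H x - H y) * (x - y) := hprod
      _ ≤ |(H x - H y) * (x - y)| := le_abs_self _
      _ = |H x - H y| * |x - y| := abs_mul _ _
  rcases eq_or_ne x y with h | h
  · simp [h]
  · have hpos : 0 < |x - y| := abs_pos.2 (sub_ne_zero.2 h)
    exact le_of_mul_le_mul_right hsq hpos
end

section
/- Let K be a nonempty closed convex subset of ℝ^d, let α ∈ ℝ^d, let a ∈ ℝ^d with ‖a‖ ≤ 1, and let c ∈ [0, 1]. Define H : ℝ → ℝ by H(x) = x + c ⟨a, P_K(α + x a)⟩. Then for all x, y ∈ ℝ: |H(x) − H(y)| ≥ (1 + c) ‖P_K(α + x a) − P_K(α + y a)‖. -/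
set_option maxHeartbeats 1000000


/-- Strengthened lower bound from the proof of Lemma 5.2 of the paper. Let `K` be
a nonempty closed convex subset of `ℝ^d` (with metric projection `P`),
`α, a ∈ ℝ^d` with `‖a‖ ≤ 1` and `c ∈ [0, 1]`. Then
`H(x) = x + c ⟨a, P (α + x a)⟩` satisfies
`|H(x) - H(y)| ≥ (1 + c) ‖P (α + x a) - P (α + y a)‖` for all `x, y ∈ ℝ`. -/
theorem expansion_inequality_projection (d : ℕ)
    (K : Set (EuclideanSpace ℝ (Fin d)))
    (hKne : K.Nonempty) (hKcl : IsClosed K) (hKco : Convex ℝ K)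
    (P : EuclideanSpace ℝ (Fin d) → EuclideanSpace ℝ (Fin d))
    (hPmem : ∀ x, P x ∈ K)
    (hPmin : ∀ x, ∀ y ∈ K, dist x (P x) ≤ dist x y)
    (α a : EuclideanSpace ℝ (Fin d)) (ha : ‖a‖ ≤ 1)
    (c : ℝ) (hc : c ∈ Set.Icc (0 : ℝ) 1)
    (H : ℝ → ℝ)
    (hH : ∀ x : ℝ, H x = x + c * (inner ℝ a (P (α + x • a)) : ℝ)) :
    ∀ x y : ℝ, (1 + c) * ‖P (α + x • a) - P (α + y • a)‖ ≤ |H x - H y| := by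
  obtain ⟨hc0, hc1⟩ := hc
  -- variational inequality
  have hvar : ∀ z : EuclideanSpace ℝ (Fin d), ∀ w ∈ K,
      (inner ℝ (z - P z) (w - P z) : ℝ) ≤ 0 := by
    intro z w hw
    haveI : Nonempty K := hKne.to_subtype
    have hinf : ‖z - P z‖ = ⨅ w : K, ‖z - w‖ := by
      apply le_antisymm
      · exact le_ciInf fun ⟨w', hw'⟩ => by
          simpa [dist_eq_norm] using hPmin z w' hw'
      · have := ciInf_le (f := fun w : K => ‖z - (w : EuclideanSpace ℝ (Fin d))‖)
          ⟨0, fun _ ⟨_, h⟩ => h ▸ norm_nonneg _⟩ ⟨P z, hPmem z⟩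
        simpa using this
    exact ((norm_eq_iInf_iff_real_inner_le_zero hKco (hPmem z)).1 hinf) w hw
  intro x y
  set u := P (α + x • a) with hu
  set v := P (α + y • a) with hv
  have h1 := hvar (α + x • a) v (hPmem _)
  have h2 := hvar (α + y • a) u (hPmem _)
  set s : ℝ := inner ℝ a (u - v) with hs
  set r : ℝ := ‖u - v‖ with hr
  have key : r ^ 2 ≤ (x - y) * s := by
    have expand : (inner ℝ ((α + x • a) - u) (v - u) : ℝ)
        + (inner ℝ ((α + y • a) - v) (u - v) : ℝ)
        = -((x - y) * s) + r ^ 2 := by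
      simp only [hs, hr, inner_sub_left, inner_sub_right, inner_add_left,
        real_inner_smul_left, ← real_inner_self_eq_norm_sq]
      rw [real_inner_comm v u]
      ring
    nlinarith [add_nonpos h1 h2, expand]
  have hsr : |s| ≤ r := by
    calc |s| ≤ ‖a‖ * ‖u - v‖ := abs_real_inner_le_norm a (u - v)
    _ ≤ 1 * r := by apply mul_le_mul_of_nonneg_right ha (norm_nonneg _)
    _ = r := one_mul r
  have hHxy : H x - H y = (x - y) + c * s := by
    rw [hH x, hH y, hs, ← hu, ← hv, inner_sub_right]; ring
  clear_value u v s r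
  rw [hHxy]
  rcases eq_or_lt_of_le (norm_nonneg (u - v)) with h0 | hrpos
  · have hr0 : r = 0 := hr.trans h0.symm
    rw [hr0, mul_zero]
    exact abs_nonneg _
  rw [← hr] at hrpos
  have habs := abs_le.1 hsr
  rcases lt_trichotomy s 0 with hsneg | hs0 | hspos
  · have ht : x - y < 0 := by nlinarith
    have : (x - y) + c * s < 0 := by nlinarith
    rw [abs_of_neg this]
    nlinarith [mul_nonneg (sub_nonneg.2 (neg_le.1 habs.1)) (sub_nonneg.2 (by nlinarith : c * (-s) ≤ r)), key]
  · exfalso; rw [hs0, mul_zero] at key; nlinarith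
  · have ht : 0 < x - y := by nlinarith
    have : 0 < (x - y) + c * s := by nlinarith
    rw [abs_of_pos this]
    nlinarith [mul_nonneg (sub_nonneg.2 habs.2) (sub_nonneg.2 (by nlinarith : c * s ≤ r)), key]
end

section
/- Let σ be a real symmetric positive definite d×d matrix, σ* ∈ ℝ^d, and ς the positive semidefinite square root of σ² + σ* σ*ᵀ. Fix w ∈ ℝ^d, z* ∈ ℝ, and set v := ς⁻¹(σ w + z* σ*). Let A ⊆ ℝ^d be nonempty, closed and convex. Then ςA := {ςπ : π ∈ A} is nonempty, closed and convex, the function π ↦ ‖w − σπ‖² + (z* − ⟨σ*, π⟩)² attains its minimum over A at the unique point π̃ = ς⁻¹ P_{ςA}(v), and the minimal value equals dist(v, ςA)² + ‖w‖² + (z*)² − ‖v‖². -/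
open Matrix

/-- Euclidean embedding of `Fin d → ℝ`, so that `‖·‖` and `dist` denote the
Euclidean norm and distance. -/
noncomputable def e2 {d : ℕ} (x : Fin d → ℝ) : EuclideanSpace ℝ (Fin d) :=
  (EuclideanSpace.equiv (Fin d) ℝ).symm x
lemma e2_sub {d : ℕ} (x y : Fin d → ℝ) : e2 (x - y) = e2 x - e2 y := rfl

lemma norm_e2_sq {d : ℕ} (x : Fin d → ℝ) : ‖e2 x‖ ^ 2 = x ⬝ᵥ x := by
  rw [EuclideanSpace.norm_sq_eq]
  simp [e2, dotProduct, sq]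

lemma dmv {d : ℕ} (M : Matrix (Fin d) (Fin d) ℝ) (x y : Fin d → ℝ) :
    x ⬝ᵥ (M *ᵥ y) = (Mᵀ *ᵥ x) ⬝ᵥ y := by
  rw [Matrix.dotProduct_mulVec, ← Matrix.mulVec_transpose]

lemma vmv_mulVec {d : ℕ} (a x : Fin d → ℝ) : vecMulVec a a *ᵥ x = (a ⬝ᵥ x) • a := by
  ext i
  simp [vecMulVec, mulVec, dotProduct, Finset.mul_sum]
  rw [Finset.sum_mul]
  exact Finset.sum_congr rfl fun j _ => by ring
/-- Pointwise optimization step in the proof of Theorem 3.1 of the paper.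
With `σ` symmetric positive definite, `σ* ∈ ℝ^d`, `ς` the positive semidefinite
square root of `σ² + σ* σ*ᵀ`, `w ∈ ℝ^d`, `z* ∈ ℝ`, `v = ς⁻¹(σ w + z* σ*)`, and
`A ⊆ ℝ^d` nonempty closed convex with `p` the metric projection of `v` onto
`ςA`: the set `ςA` is nonempty, closed and convex, the function
`π ↦ ‖w - σπ‖² + (z* - ⟨σ*, π⟩)²` attains its minimum over `A` at the unique
point `π̃ = ς⁻¹ p`, and the minimal value is
`dist(v, ςA)² + ‖w‖² + (z*)² - ‖v‖²`. -/
theorem pointwise_optimization (d : ℕ)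
    (σ : Matrix (Fin d) (Fin d) ℝ) (hσ : σ.PosDef)
    (σstar : Fin d → ℝ)
    (ς : Matrix (Fin d) (Fin d) ℝ) (hς : ς.PosSemidef)
    (hςsq : ς * ς = σ * σ + vecMulVec σstar σstar)
    (w : Fin d → ℝ) (zstar : ℝ) (v : Fin d → ℝ)
    (hv : v = ς⁻¹ *ᵥ (σ *ᵥ w + zstar • σstar))
    (A : Set (Fin d → ℝ)) (hAne : A.Nonempty) (hAcl : IsClosed A)
    (hAco : Convex ℝ A)
    (p : Fin d → ℝ)
    (hpmem : p ∈ (fun π => ς *ᵥ π) '' A)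
    (hpmin : ∀ y ∈ (fun π => ς *ᵥ π) '' A, dist (e2 v) (e2 p) ≤ dist (e2 v) (e2 y)) :
    ((fun π => ς *ᵥ π) '' A).Nonempty ∧
    IsClosed ((fun π => ς *ᵥ π) '' A) ∧
    Convex ℝ ((fun π => ς *ᵥ π) '' A) ∧
    ς⁻¹ *ᵥ p ∈ A ∧
    (∀ π ∈ A,
      ‖e2 (w - σ *ᵥ (ς⁻¹ *ᵥ p))‖ ^ 2 + (zstar - σstar ⬝ᵥ (ς⁻¹ *ᵥ p)) ^ 2
        ≤ ‖e2 (w - σ *ᵥ π)‖ ^ 2 + (zstar - σstar ⬝ᵥ π) ^ 2) ∧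
    (∀ π ∈ A,
      ‖e2 (w - σ *ᵥ π)‖ ^ 2 + (zstar - σstar ⬝ᵥ π) ^ 2
        = ‖e2 (w - σ *ᵥ (ς⁻¹ *ᵥ p))‖ ^ 2 + (zstar - σstar ⬝ᵥ (ς⁻¹ *ᵥ p)) ^ 2
        → π = ς⁻¹ *ᵥ p) ∧
    ‖e2 (w - σ *ᵥ (ς⁻¹ *ᵥ p))‖ ^ 2 + (zstar - σstar ⬝ᵥ (ς⁻¹ *ᵥ p)) ^ 2
      = Metric.infDist (e2 v) (e2 '' ((fun π => ς *ᵥ π) '' A)) ^ 2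
        + ‖e2 w‖ ^ 2 + zstar ^ 2 - ‖e2 v‖ ^ 2 := by

  -- basic symmetry facts
  have hσt : σᵀ = σ := by simpa [Matrix.IsHermitian, Matrix.conjTranspose_eq_transpose_of_trivial] using hσ.1
  have hςt : ςᵀ = ς := by simpa [Matrix.IsHermitian, Matrix.conjTranspose_eq_transpose_of_trivial] using hς.1
  have hdotpos : ∀ x : Fin d → ℝ, x ≠ 0 → 0 < x ⬝ᵥ (σ *ᵥ x) := by
    intro x hx; simpa using hσ.dotProduct_mulVec_pos hx
  have hdotself : ∀ x : Fin d → ℝ, 0 ≤ x ⬝ᵥ x := by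
    intro x; rw [← norm_e2_sq]; positivity
  -- σ x ≠ 0 for x ≠ 0
  have hσne : ∀ x : Fin d → ℝ, x ≠ 0 → σ *ᵥ x ≠ 0 := by
    intro x hx h0
    have := hdotpos x hx
    rw [h0] at this
    simp at this
  -- quadratic form of ς² is positive
  have hqpos : ∀ x : Fin d → ℝ, x ≠ 0 → 0 < x ⬝ᵥ ((ς * ς) *ᵥ x) := by
    intro x hx
    rw [hςsq, Matrix.add_mulVec, dotProduct_add, vmv_mulVec, dotProduct_smul,
      ← Matrix.mulVec_mulVec, dmv σ x (σ *ᵥ x), hσt]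
    have h1 : 0 < (σ *ᵥ x) ⬝ᵥ (σ *ᵥ x) :=
      lt_of_le_of_ne (hdotself _) (by
        intro h
        exact hσne x hx ((dotProduct_self_eq_zero).1 h.symm))
    rw [dotProduct_comm x σstar, smul_eq_mul]
    nlinarith [sq_nonneg (σstar ⬝ᵥ x)]
  -- ς is invertible
  have hςne : ∀ x : Fin d → ℝ, x ≠ 0 → ς *ᵥ x ≠ 0 := by
    intro x hx h0
    have := hqpos x hx
    rw [← Matrix.mulVec_mulVec, h0] at this
    simp at this
  have hdet : IsUnit ς.det := by
    rw [isUnit_iff_ne_zero]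
    intro hdet
    obtain ⟨x, hx, hMx⟩ := (Matrix.exists_mulVec_eq_zero_iff).2 hdet
    exact hςne x hx hMx
  have hinv1 : ς⁻¹ * ς = 1 := Matrix.nonsing_inv_mul ς hdet
  have hinv2 : ς * ς⁻¹ = 1 := Matrix.mul_nonsing_inv ς hdet
  have hcancel : ∀ x : Fin d → ℝ, ς *ᵥ (ς⁻¹ *ᵥ x) = x := by
    intro x; rw [Matrix.mulVec_mulVec, hinv2, Matrix.one_mulVec]
  have hcancel' : ∀ x : Fin d → ℝ, ς⁻¹ *ᵥ (ς *ᵥ x) = x := by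
    intro x; rw [Matrix.mulVec_mulVec, hinv1, Matrix.one_mulVec]
  have hςv : ς *ᵥ v = σ *ᵥ w + zstar • σstar := by rw [hv, hcancel]
  -- the key algebraic identity
  have key : ∀ π : Fin d → ℝ,
      ‖e2 (w - σ *ᵥ π)‖ ^ 2 + (zstar - σstar ⬝ᵥ π) ^ 2
        = ‖e2 v - e2 (ς *ᵥ π)‖ ^ 2 + (‖e2 w‖ ^ 2 + zstar ^ 2 - ‖e2 v‖ ^ 2) := by
    intro π
    rw [← e2_sub, norm_e2_sq, norm_e2_sq, norm_e2_sq, norm_e2_sq]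
    have h1 : w ⬝ᵥ (σ *ᵥ π) = (σ *ᵥ w) ⬝ᵥ π := by rw [dmv, hσt]
    have h2 : v ⬝ᵥ (ς *ᵥ π) = (σ *ᵥ w) ⬝ᵥ π + zstar * (σstar ⬝ᵥ π) := by
      rw [dmv, hςt, hςv, add_dotProduct, smul_dotProduct, smul_eq_mul]
    have h3 : (ς *ᵥ π) ⬝ᵥ (ς *ᵥ π) = (σ *ᵥ π) ⬝ᵥ (σ *ᵥ π) + (σstar ⬝ᵥ π) * (σstar ⬝ᵥ π) := by
      rw [dmv ς (ς *ᵥ π) π, hςt, Matrix.mulVec_mulVec, hςsq, Matrix.add_mulVec,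
        add_dotProduct, vmv_mulVec, smul_dotProduct, smul_eq_mul,
        ← Matrix.mulVec_mulVec, dmv σ (σ *ᵥ π) π, hσt, dotProduct_comm σstar π]
    rw [sub_dotProduct, dotProduct_sub, dotProduct_sub, sub_dotProduct, dotProduct_sub,
      dotProduct_sub, dotProduct_comm (σ *ᵥ π) w, dotProduct_comm (ς *ᵥ π) v, h1, h2, h3]
    ring
  -- membership of the candidate minimizer
  have hptil : ς *ᵥ (ς⁻¹ *ᵥ p) = p := hcancel p
  obtain ⟨a, haA, hap⟩ := hpmem
  have hmemA : ς⁻¹ *ᵥ p ∈ A := by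
    have : ς⁻¹ *ᵥ p = a := by rw [← hap, hcancel']
    rwa [this]
  -- convexity of the image
  have hconv : Convex ℝ ((fun π => ς *ᵥ π) '' A) := hAco.linear_image ς.mulVecLin
  -- closedness
  have himg : (fun π => ς *ᵥ π) '' A = (fun y => ς⁻¹ *ᵥ y) ⁻¹' A := by
    ext y
    constructor
    · rintro ⟨x, hx, rfl⟩
      simpa [hcancel'] using hx
    · intro hy
      exact ⟨ς⁻¹ *ᵥ y, hy, hcancel y⟩
  have hcont : Continuous (fun y : Fin d → ℝ => ς⁻¹ *ᵥ y) :=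
    (ς⁻¹.mulVecLin : (Fin d → ℝ) →ₗ[ℝ] (Fin d → ℝ)).continuous_of_finiteDimensional
  have hclosed : IsClosed ((fun π => ς *ᵥ π) '' A) := himg ▸ hAcl.preimage hcont
  -- minimality
  have hmin : ∀ π ∈ A,
      ‖e2 (w - σ *ᵥ (ς⁻¹ *ᵥ p))‖ ^ 2 + (zstar - σstar ⬝ᵥ (ς⁻¹ *ᵥ p)) ^ 2
        ≤ ‖e2 (w - σ *ᵥ π)‖ ^ 2 + (zstar - σstar ⬝ᵥ π) ^ 2 := by
    intro π hπ
    rw [key, key, hptil]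
    have hd := hpmin (ς *ᵥ π) ⟨π, hπ, rfl⟩
    rw [dist_eq_norm, dist_eq_norm] at hd
    have := pow_le_pow_left₀ (norm_nonneg _) hd 2
    linarith
  -- uniqueness
  have huniq : ∀ π ∈ A,
      ‖e2 (w - σ *ᵥ π)‖ ^ 2 + (zstar - σstar ⬝ᵥ π) ^ 2
        = ‖e2 (w - σ *ᵥ (ς⁻¹ *ᵥ p))‖ ^ 2 + (zstar - σstar ⬝ᵥ (ς⁻¹ *ᵥ p)) ^ 2
        → π = ς⁻¹ *ᵥ p := by
    intro π hπ heq
    rw [key, key, hptil] at heq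
    have heq2 : ‖e2 v - e2 (ς *ᵥ π)‖ ^ 2 = ‖e2 v - e2 p‖ ^ 2 := by linarith
    -- midpoint argument
    set q : Fin d → ℝ := ς *ᵥ π with hq
    have hmid : (1/2 : ℝ) • q + (1/2 : ℝ) • p ∈ (fun π => ς *ᵥ π) '' A :=
      hconv ⟨π, hπ, rfl⟩ ⟨a, haA, hap⟩ (by norm_num) (by norm_num) (by norm_num)
    have hdm := hpmin _ hmid
    rw [dist_eq_norm, dist_eq_norm] at hdm
    have he2mid : e2 ((1/2 : ℝ) • q + (1/2 : ℝ) • p) = (1/2 : ℝ) • e2 q + (1/2 : ℝ) • e2 p := rfl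
    rw [he2mid] at hdm
    set av := e2 v - e2 q with hav
    set bv := e2 v - e2 p with hbv
    have hsum : av + bv = (2 : ℝ) • (e2 v - ((1/2 : ℝ) • e2 q + (1/2 : ℝ) • e2 p)) := by
      rw [hav, hbv]; module
    have hpar := parallelogram_law_with_norm ℝ av bv
    have h4 : ‖av + bv‖ ^ 2 = 4 * ‖e2 v - ((1/2 : ℝ) • e2 q + (1/2 : ℝ) • e2 p)‖ ^ 2 := by
      rw [hsum, norm_smul, show ‖(2 : ℝ)‖ = 2 from by norm_num]
      ring
    have hge : ‖e2 v - e2 p‖ ^ 2 ≤ ‖e2 v - ((1/2 : ℝ) • e2 q + (1/2 : ℝ) • e2 p)‖ ^ 2 :=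
      pow_le_pow_left₀ (norm_nonneg _) hdm 2
    have h5 : 4 * ‖bv‖ ^ 2 ≤ ‖av + bv‖ ^ 2 := by rw [h4]; linarith
    have hpar' : ‖av + bv‖ ^ 2 + ‖av - bv‖ ^ 2 = 2 * (‖av‖ ^ 2 + ‖bv‖ ^ 2) := by
      simpa [sq] using hpar
    have hab : ‖av - bv‖ ^ 2 ≤ 0 := by linarith
    have h0 : ‖av - bv‖ = 0 := by
      have h6 := sq_nonneg ‖av - bv‖
      have h7 : ‖av - bv‖ ^ 2 = 0 := le_antisymm hab h6
      exact pow_eq_zero_iff (two_ne_zero) |>.1 h7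
    have hab0 : av - bv = 0 := norm_eq_zero.1 h0
    have hqp : e2 q = e2 p := by
      have : av = bv := sub_eq_zero.1 hab0
      rw [hav, hbv, sub_right_inj] at this
      exact this
    have hqp' : q = p := congrArg (EuclideanSpace.equiv (Fin d) ℝ) hqp
    rw [← hqp', hq, hcancel']
  -- infDist
  have hinf : Metric.infDist (e2 v) (e2 '' ((fun π => ς *ᵥ π) '' A)) = dist (e2 v) (e2 p) := by
    apply le_antisymm
    · exact Metric.infDist_le_dist_of_mem ⟨p, ⟨a, haA, hap⟩, rfl⟩
    · by_contra h
      push_neg at h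
      obtain ⟨yy, hyy, hlt⟩ := (Metric.infDist_lt_iff (s := e2 '' ((fun π => ς *ᵥ π) '' A)) ⟨e2 p, ⟨p, ⟨a, haA, hap⟩, rfl⟩⟩).1 h
      obtain ⟨y', hy', rfl⟩ := hyy
      exact absurd hlt (not_lt.2 (hpmin y' hy'))
  refine ⟨⟨p, ⟨a, haA, hap⟩⟩, hclosed, hconv, hmemA, hmin, huniq, ?_⟩
  rw [key, hptil, hinf, dist_eq_norm]
  ring
end

section
/- Let n ≥ 1 and let W : [0,1]² → ℝ be Lebesgue integrable such that for each i ∈ {1,…,n} and every u ∈ ((i−1)/n, i/n], W(u, v) = W(i/n, v) for all v ∈ [0,1]. Then for every i ∈ {1,…,n}: |∫_0^1 W(i/n, v) dv| ≤ 2 n ‖W‖_□. -/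
open MeasureTheory

/-- The cut norm of an integrable function `W : [0,1]² → ℝ`:
`‖W‖_□ = sup_{E, E' measurable} |∫_{E×E'} W(u,v) du dv|`. -/
noncomputable def cutNorm (W : ℝ → ℝ → ℝ) : ℝ :=
  sSup { r : ℝ | ∃ E E' : Set ℝ, MeasurableSet E ∧ MeasurableSet E' ∧
    r = |∫ u in Set.Icc (0:ℝ) 1 ∩ E, ∫ v in Set.Icc (0:ℝ) 1 ∩ E', W u v| }

/-- Final estimate in the proof of Lemma 5.6 of the paper: if `W : [0,1]² → ℝ` is
integrable and is a step function in its first variable on the uniform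
`n`-partition (i.e. `W(u,v) = W(i/n, v)` for `u ∈ ((i-1)/n, i/n]`), then for
every `i ∈ {1, …, n}`, `|∫_0^1 W(i/n, v) dv| ≤ 2 n ‖W‖_□`. -/
theorem step_integral_le_cutNorm (n : ℕ) (hn : 1 ≤ n) (W : ℝ → ℝ → ℝ)
    (hW : IntegrableOn (fun p : ℝ × ℝ => W p.1 p.2)
      (Set.Icc (0:ℝ) 1 ×ˢ Set.Icc (0:ℝ) 1))
    (hstep : ∀ i : ℕ, 1 ≤ i → i ≤ n →
      ∀ u ∈ Set.Ioc (((i : ℝ) - 1) / n) ((i : ℝ) / n),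
      ∀ v ∈ Set.Icc (0:ℝ) 1, W u v = W ((i : ℝ) / n) v)
    (i : ℕ) (hi1 : 1 ≤ i) (hin : i ≤ n) :
    |∫ v in Set.Icc (0:ℝ) 1, W ((i : ℝ) / n) v| ≤ 2 * n * cutNorm W := by
  have hn0 : (0:ℝ) < n := by exact_mod_cast Nat.pos_of_ne_zero (by omega)
  set S : Set ℝ := { r : ℝ | ∃ E E' : Set ℝ, MeasurableSet E ∧ MeasurableSet E' ∧
    r = |∫ u in Set.Icc (0:ℝ) 1 ∩ E, ∫ v in Set.Icc (0:ℝ) 1 ∩ E', W u v| } with hS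
  -- Rewriting any double set integral as an integral over the product set.
  have key : ∀ E E' : Set ℝ, MeasurableSet E → MeasurableSet E' →
      (∫ u in Set.Icc (0:ℝ) 1 ∩ E, ∫ v in Set.Icc (0:ℝ) 1 ∩ E', W u v)
        = ∫ p in (Set.Icc (0:ℝ) 1 ∩ E) ×ˢ (Set.Icc (0:ℝ) 1 ∩ E'), W p.1 p.2 := by
    intro E E' hE hE'
    have hsub : (Set.Icc (0:ℝ) 1 ∩ E) ×ˢ (Set.Icc (0:ℝ) 1 ∩ E')
        ⊆ Set.Icc (0:ℝ) 1 ×ˢ Set.Icc (0:ℝ) 1 :=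
      Set.prod_mono Set.inter_subset_left Set.inter_subset_left
    have hint : Integrable (Function.uncurry W)
        ((volume.restrict (Set.Icc (0:ℝ) 1 ∩ E)).prod
          (volume.restrict (Set.Icc (0:ℝ) 1 ∩ E'))) := by
      rw [Measure.prod_restrict, ← Measure.volume_eq_prod]
      exact hW.mono_set hsub
    have := integral_integral hint
    rw [this, Measure.prod_restrict, ← Measure.volume_eq_prod]
  -- The supremum set is bounded above.
  have hbdd : BddAbove S := by
    refine ⟨∫ p in Set.Icc (0:ℝ) 1 ×ˢ Set.Icc (0:ℝ) 1, |W p.1 p.2|, ?_⟩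
    rintro r ⟨E, E', hE, hE', rfl⟩
    rw [key E E' hE hE']
    calc |∫ p in (Set.Icc (0:ℝ) 1 ∩ E) ×ˢ (Set.Icc (0:ℝ) 1 ∩ E'), W p.1 p.2|
        ≤ ∫ p in (Set.Icc (0:ℝ) 1 ∩ E) ×ˢ (Set.Icc (0:ℝ) 1 ∩ E'), |W p.1 p.2| := by
          simpa [Real.norm_eq_abs] using
            norm_integral_le_integral_norm (μ := volume.restrict
              ((Set.Icc (0:ℝ) 1 ∩ E) ×ˢ (Set.Icc (0:ℝ) 1 ∩ E')))
              (fun p : ℝ × ℝ => W p.1 p.2)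
      _ ≤ ∫ p in Set.Icc (0:ℝ) 1 ×ˢ Set.Icc (0:ℝ) 1, |W p.1 p.2| := by
          refine setIntegral_mono_set hW.abs ?_ ?_
          · filter_upwards with p using abs_nonneg _
          · exact Filter.Eventually.of_forall
              (Set.prod_mono Set.inter_subset_left Set.inter_subset_left)
  -- The cut norm is nonnegative.
  have h0 : (0:ℝ) ∈ S := ⟨∅, ∅, MeasurableSet.empty, MeasurableSet.empty, by simp⟩
  have hcut0 : 0 ≤ cutNorm W := le_csSup hbdd h0
  -- The key element of `S`.
  set c : ℝ := ∫ v in Set.Icc (0:ℝ) 1, W ((i : ℝ) / n) v with hc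
  set E : Set ℝ := Set.Ioc (((i : ℝ) - 1) / n) ((i : ℝ) / n) with hE
  have hEsub : E ⊆ Set.Icc (0:ℝ) 1 := by
    intro u hu
    have h1 : (0:ℝ) ≤ ((i : ℝ) - 1) / n := by
      apply div_nonneg _ hn0.le
      have : (1:ℝ) ≤ (i:ℝ) := by exact_mod_cast hi1
      linarith
    have h2 : ((i : ℝ)) / n ≤ 1 := by
      rw [div_le_one hn0]
      exact_mod_cast hin
    exact ⟨le_trans h1 hu.1.le, le_trans hu.2 h2⟩
  have hIE : Set.Icc (0:ℝ) 1 ∩ E = E := Set.inter_eq_self_of_subset_right hEsub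
  have hIuniv : Set.Icc (0:ℝ) 1 ∩ (Set.univ : Set ℝ) = Set.Icc (0:ℝ) 1 :=
    Set.inter_univ _
  have hmem : |(1 / (n:ℝ)) * c| ∈ S := by
    refine ⟨E, Set.univ, measurableSet_Ioc, MeasurableSet.univ, ?_⟩
    rw [hIE, hIuniv]
    have hcongr : ∫ u in E, (∫ v in Set.Icc (0:ℝ) 1, W u v) = ∫ u in E, c := by
      refine setIntegral_congr_fun measurableSet_Ioc ?_
      intro u hu
      exact setIntegral_congr_fun measurableSet_Icc
        (fun v hv => hstep i hi1 hin u hu v hv)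
    rw [hcongr, setIntegral_const]
    congr 1
    have hvol : volume E = ENNReal.ofReal (1 / (n:ℝ)) := by
      rw [hE, Real.volume_Ioc]
      congr 1
      field_simp
      ring
    rw [measureReal_def, hvol, ENNReal.toReal_ofReal (by positivity), smul_eq_mul]
  have hle : |(1 / (n:ℝ)) * c| ≤ cutNorm W := le_csSup hbdd hmem
  have habs : |(1 / (n:ℝ)) * c| = (1 / (n:ℝ)) * |c| := by
    rw [abs_mul, abs_of_pos (by positivity)]
  rw [habs] at hle
  have : |c| ≤ (n:ℝ) * cutNorm W := by
    rw [← mul_le_mul_iff_right₀ (show (0:ℝ) < 1/(n:ℝ) by positivity)]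
    calc (1/(n:ℝ)) * |c| ≤ cutNorm W := hle
      _ = (1/(n:ℝ)) * ((n:ℝ) * cutNorm W) := by field_simp
  calc |c| ≤ (n:ℝ) * cutNorm W := this
    _ ≤ 2 * n * cutNorm W := by nlinarith
end
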